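/- Let $m \geq 2$ and let $f \in \mathbb{C}[[x,y]]$ with homogeneous leading term $f_m$ of degree $m$ satisfying $f_m = x^\mu y^\nu g$, $\mu, \nu \geq 1$, $x \nmid g$, $y \nmid g$. Let $g' \in \mathbb{C}[[x,y]]$ and suppose $a, b, a', b' \in \mathbb{C}[[x,y]]$ are such that $g' - a f_x - b f_y \in \langle x,y\rangle^m$ and $g' - a' f_x - b' f_y \in \langle x,y\rangle^m$, where $f_x = \partial f/\partial x$, $f_y = \partial f/\partial y$. Then $a(0,0) = a'(0,0)$ and $b(0,0) = b'(0,0)$. -/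

import Mathlib

set_option synthInstance.maxHeartbeats 1000000
set_option maxHeartbeats 2000000

open MvPowerSeries TrivSqZeroExt DualNumber

noncomputable section

abbrev R2 := MvPowerSeries (Fin 2) ℂ

def Mxy : Ideal R2 := Ideal.span {MvPowerSeries.X 0, MvPowerSeries.X 1}

/-- Formal partial derivative of a power series in two variables. -/
def pd (i : Fin 2) (f : R2) : R2 :=
  fun d => (d i + 1 : ℂ) * MvPowerSeries.coeff (R := ℂ) (d + Finsupp.single i 1) f

/-- The element `x + ε a` of the dual numbers over `ℂ[[x,y]]`. -/
def Xa (a : R2) : DualNumber R2 := inl (MvPowerSeries.X 0) + eps * inl a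

/-- The element `y + ε b` of the dual numbers over `ℂ[[x,y]]`. -/
def Yb (b : R2) : DualNumber R2 := inl (MvPowerSeries.X 1) + eps * inl b

/-- The `n`-th term of the expansion of `f (x + ε a, y + ε b)`. -/
def termD (a b f : R2) (n : Fin 2 →₀ ℕ) : DualNumber R2 :=
  inl (MvPowerSeries.C (σ := Fin 2) (R := ℂ) (MvPowerSeries.coeff (R := ℂ) n f)) *
    (Xa a ^ (n 0) * Yb b ^ (n 1))

/-- Substitution `f (x + ε a, y + ε b)`, defined coefficientwise: each coefficient of
each component only receives contributions from finitely many terms of the expansion. -/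
def substDual (a b f : R2) : DualNumber R2 :=
  TrivSqZeroExt.inl (R := R2) (M := R2) ((fun d => MvPowerSeries.coeff (R := ℂ) d
        (fst (∑ n ∈ Finset.Iic (d + Finsupp.single 0 1 + Finsupp.single 1 1),
          termD a b f n)) : R2)) +
  TrivSqZeroExt.inr (R := R2) (M := R2) ((fun d => MvPowerSeries.coeff (R := ℂ) d
        (snd (∑ n ∈ Finset.Iic (d + Finsupp.single 0 1 + Finsupp.single 1 1),
          termD a b f n)) : R2))

/-! ### Auxiliary lemmas -/

lemma isUnit_C_of_ne {c : ℂ} (hc : c ≠ 0) :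
    IsUnit (MvPolynomial.C c : MvPolynomial (Fin 2) ℂ) :=
  isUnit_iff_exists_inv.mpr
    ⟨MvPolynomial.C c⁻¹, by rw [← map_mul, mul_inv_cancel₀ hc, map_one]⟩

lemma fin2_eq_zero {d : Fin 2 →₀ ℕ} (h : d 0 + d 1 = 0) : d = 0 := by
  refine Finsupp.ext fun i => ?_
  revert i; rw [Fin.forall_fin_two]
  constructor <;> simp <;> omega

lemma single_total (i : Fin 2) : (Finsupp.single i 1) 0 + (Finsupp.single i 1) 1 = 1 := by
  revert i; rw [Fin.forall_fin_two]; constructor <;> simp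

lemma add_single_total (d : Fin 2 →₀ ℕ) (i : Fin 2) :
    (d + Finsupp.single i 1 : Fin 2 →₀ ℕ) 0 + (d + Finsupp.single i 1 : Fin 2 →₀ ℕ) 1
      = d 0 + d 1 + 1 := by
  have := single_total i
  simp only [Finsupp.add_apply]
  omega

lemma deg2 (d : Fin 2 →₀ ℕ) : d.degree = d 0 + d 1 := by
  rw [Finsupp.degree, ← Fin.sum_univ_two (fun i => d i)]
  exact Finset.sum_subset (Finset.subset_univ _) (fun i _ hi => Finsupp.notMem_support_iff.mp hi)

lemma coeff_pd (i : Fin 2) (f : R2) (d : Fin 2 →₀ ℕ) :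
    MvPowerSeries.coeff (R := ℂ) d (pd i f)
      = (d i + 1 : ℂ) * MvPowerSeries.coeff (R := ℂ) (d + Finsupp.single i 1) f := rfl

lemma constantCoeff_mem_Mxy {q : R2} (hq : q ∈ Mxy) :
    MvPowerSeries.constantCoeff (σ := Fin 2) (R := ℂ) q = 0 := by
  have h : Mxy ≤ RingHom.ker (MvPowerSeries.constantCoeff (σ := Fin 2) (R := ℂ)) := by
    rw [Mxy, Ideal.span_le]
    rintro x (rfl | rfl) <;> simp [RingHom.mem_ker]
  exact h hq

lemma coeff_zero_of_mem_pow : ∀ (k : ℕ) (h : R2), h ∈ Mxy ^ k →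
    ∀ d : Fin 2 →₀ ℕ, d 0 + d 1 < k → MvPowerSeries.coeff (R := ℂ) d h = 0 := by
  intro k
  induction k with
  | zero => intro h _ d hd; omega
  | succ k ih =>
    intro h hh d hd
    rw [pow_succ] at hh
    refine Submodule.mul_induction_on hh ?_ ?_
    · intro p hp q hq
      rw [MvPowerSeries.coeff_mul]
      apply Finset.sum_eq_zero
      rintro ⟨e, e'⟩ hmem
      rw [Finset.HasAntidiagonal.mem_antidiagonal] at hmem
      by_cases he : e 0 + e 1 < k
      · rw [ih p hp e he, zero_mul]
      · have h0 : e 0 + e' 0 = d 0 := by rw [← hmem]; simp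
        have h1 : e 1 + e' 1 = d 1 := by rw [← hmem]; simp
        have he' : e' = 0 := fin2_eq_zero (by omega)
        rw [he', MvPowerSeries.coeff_zero_eq_constantCoeff_apply,
          constantCoeff_mem_Mxy hq, mul_zero]
    · intro x y hx hy; rw [map_add, hx, hy, add_zero]

open MvPolynomial in
lemma coeff_pderiv (i : Fin 2) (p : MvPolynomial (Fin 2) ℂ) (d : Fin 2 →₀ ℕ) :
    MvPolynomial.coeff d (pderiv i p) =
      (d i + 1 : ℂ) * MvPolynomial.coeff (d + Finsupp.single i 1) p := by
  induction p using MvPolynomial.induction_on' with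
  | monomial u a =>
    rw [pderiv_monomial, MvPolynomial.coeff_monomial, MvPolynomial.coeff_monomial]
    by_cases h : u = d + Finsupp.single i 1
    · subst h
      rw [if_pos (add_tsub_cancel_right _ _), if_pos rfl]
      have : ((d + Finsupp.single i 1 : Fin 2 →₀ ℕ)) i = d i + 1 := by
        simp
      rw [this]
      push_cast
      ring
    · rw [if_neg h, mul_zero]
      by_cases h' : u - Finsupp.single i 1 = d
      · rw [if_pos h']
        have hui : u i = 0 := by
          by_contra hne
          apply h
          have hle : Finsupp.single i 1 ≤ u := by
            rw [Finsupp.single_le_iff]; omega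
          rw [← h', tsub_add_cancel_of_le hle]
        simp [hui]
      · rw [if_neg h']
  | add p q hp hq =>
    simp only [map_add, coeff_add, hp, hq]
    ring

lemma prime_X_fin2 (i : Fin 2) : Prime (MvPolynomial.X i : MvPolynomial (Fin 2) ℂ) := by
  have h0 : Prime (MvPolynomial.X PUnit.unit.{1} : MvPolynomial PUnit.{1} ℂ) := by
    rw [← MulEquiv.prime_iff (MvPolynomial.pUnitAlgEquiv ℂ).toMulEquiv]
    have : (MvPolynomial.pUnitAlgEquiv ℂ).toMulEquiv (MvPolynomial.X PUnit.unit.{1}) =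
        Polynomial.X := by
      simp [MvPolynomial.pUnitAlgEquiv]
    rw [this]
    exact Polynomial.prime_X
  have h1 : Prime (MvPolynomial.X (⟨i, Set.mem_singleton i⟩ : ({i} : Set (Fin 2))) :
      MvPolynomial ({i} : Set (Fin 2)) ℂ) := by
    rw [← MulEquiv.prime_iff (MvPolynomial.renameEquiv ℂ (Equiv.equivPUnit ↥({i} : Set (Fin 2)))).toMulEquiv]
    simpa using h0
  have := (MvPolynomial.prime_rename_iff ({i} : Set (Fin 2))).mpr h1
  simpa using this

lemma X_not_dvd_X {i j : Fin 2} (h : i ≠ j) :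
    ¬ (MvPolynomial.X i ∣ (MvPolynomial.X j : MvPolynomial (Fin 2) ℂ)) := by
  rintro ⟨k, hk⟩
  have h2 := congrArg (MvPolynomial.coeff (Finsupp.single j 1)) hk
  rw [MvPolynomial.coeff_X, MvPolynomial.coeff_X_mul'] at h2
  rw [if_pos rfl, if_neg (by simp [Finsupp.single_apply, h, h.symm])] at h2
  exact one_ne_zero h2

/-- Uniqueness of the tangent vector of the equimultiple section in the
non-unitangential case: the constant terms of `a, b` are determined. -/
theorem section_tangent_unique (m μ ν : ℕ) (hm : 2 ≤ m) (f : R2)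
    (hf : f ∈ Mxy ^ m) (hf' : f ∉ Mxy ^ (m + 1))
    (fm g : MvPolynomial (Fin 2) ℂ) (hfm : fm.IsHomogeneous m)
    (hcoeff : ∀ d : Fin 2 →₀ ℕ, d 0 + d 1 = m →
      MvPolynomial.coeff d fm = MvPowerSeries.coeff (R := ℂ) d f)
    (hμ : 1 ≤ μ) (hν : 1 ≤ ν)
    (heq : fm = MvPolynomial.X 0 ^ μ * MvPolynomial.X 1 ^ ν * g)
    (hgx : ¬ MvPolynomial.X 0 ∣ g) (hgy : ¬ MvPolynomial.X 1 ∣ g)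
    (g' a b a' b' : R2)
    (hab : g' - a * pd 0 f - b * pd 1 f ∈ Mxy ^ m)
    (hab' : g' - a' * pd 0 f - b' * pd 1 f ∈ Mxy ^ m) :
    MvPowerSeries.constantCoeff (σ := Fin 2) (R := ℂ) a = MvPowerSeries.constantCoeff (σ := Fin 2) (R := ℂ) a' ∧
    MvPowerSeries.constantCoeff (σ := Fin 2) (R := ℂ) b = MvPowerSeries.constantCoeff (σ := Fin 2) (R := ℂ) b' := by
  classical
  set α := MvPowerSeries.constantCoeff (σ := Fin 2) (R := ℂ) a - MvPowerSeries.constantCoeff (σ := Fin 2) (R := ℂ) a'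
    with hαdef
  set β := MvPowerSeries.constantCoeff (σ := Fin 2) (R := ℂ) b - MvPowerSeries.constantCoeff (σ := Fin 2) (R := ℂ) b'
    with hβdef
  suffices hs : α = 0 ∧ β = 0 by
    exact ⟨sub_eq_zero.mp hs.1, sub_eq_zero.mp hs.2⟩
  -- the difference lies in `Mxy ^ m`
  have hmem : (a - a') * pd 0 f + (b - b') * pd 1 f ∈ Mxy ^ m := by
    have h := Ideal.sub_mem _ hab' hab
    have e : (g' - a' * pd 0 f - b' * pd 1 f) - (g' - a * pd 0 f - b * pd 1 f)
        = (a - a') * pd 0 f + (b - b') * pd 1 f := by ring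
    rwa [e] at h
  -- coefficients of `u * pd i f` in total degree `m - 1`
  have hprod : ∀ (u : R2) (i : Fin 2) (d : Fin 2 →₀ ℕ), d 0 + d 1 + 1 = m →
      MvPowerSeries.coeff (R := ℂ) d (u * pd i f) =
        MvPowerSeries.constantCoeff (σ := Fin 2) (R := ℂ) u * MvPowerSeries.coeff (R := ℂ) d (pd i f) := by
    intro u i d hd
    have hs : ∀ p ∈ Finset.HasAntidiagonal.antidiagonal d, p ≠ ((0 : Fin 2 →₀ ℕ), d) →
        MvPowerSeries.coeff (R := ℂ) p.1 u * MvPowerSeries.coeff (R := ℂ) p.2 (pd i f) = 0 := by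
      rintro ⟨e, e'⟩ hmem' hne
      rw [Finset.HasAntidiagonal.mem_antidiagonal] at hmem'
      have h0 : e 0 + e' 0 = d 0 := by rw [← hmem']; simp
      have h1 : e 1 + e' 1 = d 1 := by rw [← hmem']; simp
      have he : e 0 + e 1 ≠ 0 := by
        intro hz
        apply hne
        have he0 : e = 0 := fin2_eq_zero hz
        simp only [Prod.mk.injEq]
        refine ⟨he0, ?_⟩
        rw [he0, zero_add] at hmem'
        simpa using hmem'
      have hz : MvPowerSeries.coeff (R := ℂ) e' (pd i f) = 0 := by
        rw [coeff_pd]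
        rw [coeff_zero_of_mem_pow m f hf _ (by rw [add_single_total]; omega), mul_zero]
      rw [hz, mul_zero]
    rw [MvPowerSeries.coeff_mul,
      Finset.sum_eq_single_of_mem ((0 : Fin 2 →₀ ℕ), d)
        (Finset.HasAntidiagonal.mem_antidiagonal.mpr (zero_add d)) hs,
      MvPowerSeries.coeff_zero_eq_constantCoeff_apply]
  -- the key coefficient identity
  have hkey : ∀ d : Fin 2 →₀ ℕ, d 0 + d 1 + 1 = m →
      α * ((d 0 + 1 : ℂ) * MvPowerSeries.coeff (R := ℂ) (d + Finsupp.single 0 1) f)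
        + β * ((d 1 + 1 : ℂ) * MvPowerSeries.coeff (R := ℂ) (d + Finsupp.single 1 1) f) = 0 := by
    intro d hd
    have h0 := coeff_zero_of_mem_pow m _ hmem d (by omega)
    rw [map_add, hprod _ 0 d hd, hprod _ 1 d hd, map_sub, map_sub,
      coeff_pd, coeff_pd] at h0
    linear_combination h0
  -- the polynomial identity `α ∂x fm + β ∂y fm = 0`
  have hD : MvPolynomial.C α * MvPolynomial.pderiv 0 fm
      + MvPolynomial.C β * MvPolynomial.pderiv 1 fm = 0 := by
    rw [MvPolynomial.eq_zero_iff]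
    intro d
    rw [MvPolynomial.coeff_add, MvPolynomial.coeff_C_mul, MvPolynomial.coeff_C_mul,
      _root_.coeff_pderiv, _root_.coeff_pderiv]
    by_cases hd : d 0 + d 1 + 1 = m
    · rw [hcoeff _ (by rw [add_single_total]; omega),
        hcoeff _ (by rw [add_single_total]; omega)]
      exact hkey d hd
    · rw [MvPolynomial.IsHomogeneous.coeff_eq_zero hfm
          (by rw [deg2, add_single_total]; omega),
        MvPolynomial.IsHomogeneous.coeff_eq_zero hfm
          (by rw [deg2, add_single_total]; omega)]
      simp
  -- compute the two partial derivatives of `fm`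
  obtain ⟨μ', rfl⟩ : ∃ μ', μ = μ' + 1 := ⟨μ - 1, by omega⟩
  obtain ⟨ν', rfl⟩ : ∃ ν', ν = ν' + 1 := ⟨ν - 1, by omega⟩
  set h1 : MvPolynomial (Fin 2) ℂ :=
    ((μ' + 1 : ℕ) : MvPolynomial (Fin 2) ℂ) * g
      + MvPolynomial.X 0 * MvPolynomial.pderiv 0 g with hh1
  set h2 : MvPolynomial (Fin 2) ℂ :=
    ((ν' + 1 : ℕ) : MvPolynomial (Fin 2) ℂ) * g
      + MvPolynomial.X 1 * MvPolynomial.pderiv 1 g with hh2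
  have hP : MvPolynomial.pderiv 0 fm
      = MvPolynomial.X 0 ^ μ' * MvPolynomial.X 1 ^ (ν' + 1) * h1 := by
    rw [heq, hh1]
    simp only [MvPolynomial.pderiv_mul, MvPolynomial.pderiv_pow, MvPolynomial.pderiv_X_self,
      MvPolynomial.pderiv_X_of_ne (show (1 : Fin 2) ≠ 0 by decide), Nat.add_sub_cancel,
      mul_one, mul_zero, zero_mul, add_zero, zero_add]
    ring
  have hQ : MvPolynomial.pderiv 1 fm
      = MvPolynomial.X 0 ^ (μ' + 1) * MvPolynomial.X 1 ^ ν' * h2 := by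
    rw [heq, hh2]
    simp only [MvPolynomial.pderiv_mul, MvPolynomial.pderiv_pow, MvPolynomial.pderiv_X_self,
      MvPolynomial.pderiv_X_of_ne (show (0 : Fin 2) ≠ 1 by decide), Nat.add_sub_cancel,
      mul_one, mul_zero, zero_mul, add_zero, zero_add]
    ring
  have hfac : MvPolynomial.X 0 ^ μ' * MvPolynomial.X 1 ^ ν' *
      (MvPolynomial.C α * MvPolynomial.X 1 * h1
        + MvPolynomial.C β * MvPolynomial.X 0 * h2) = 0 := by
    rw [← hD, hP, hQ]; ring
  have hXne : (MvPolynomial.X 0 ^ μ' * MvPolynomial.X 1 ^ ν' : MvPolynomial (Fin 2) ℂ) ≠ 0 :=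
    mul_ne_zero (pow_ne_zero _ (MvPolynomial.X_ne_zero 0))
      (pow_ne_zero _ (MvPolynomial.X_ne_zero 1))
  have key : MvPolynomial.C α * MvPolynomial.X 1 * h1
      + MvPolynomial.C β * MvPolynomial.X 0 * h2 = 0 := by
    rcases mul_eq_zero.mp hfac with h | h
    · exact absurd h hXne
    · exact h
  have hnd1 : ¬ (MvPolynomial.X 0 ∣ h1) := by
    intro hdvd
    have hdvd' : MvPolynomial.X 0 ∣ ((μ' + 1 : ℕ) : MvPolynomial (Fin 2) ℂ) * g := by
      have e : ((μ' + 1 : ℕ) : MvPolynomial (Fin 2) ℂ) * g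
          = h1 - MvPolynomial.X 0 * MvPolynomial.pderiv 0 g := by rw [hh1]; ring
      rw [e]
      exact dvd_sub hdvd (Dvd.intro _ rfl)
    rcases (prime_X_fin2 0).2.2 _ _ hdvd' with h | h
    · have hu : IsUnit (((μ' + 1 : ℕ) : MvPolynomial (Fin 2) ℂ)) := by
        rw [← MvPolynomial.C_eq_coe_nat]
        exact isUnit_C_of_ne (by exact_mod_cast Nat.succ_ne_zero μ')
      exact (prime_X_fin2 0).not_unit (isUnit_of_dvd_unit h hu)
    · exact hgx h
  have hnd2 : ¬ (MvPolynomial.X 1 ∣ h2) := by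
    intro hdvd
    have hdvd' : MvPolynomial.X 1 ∣ ((ν' + 1 : ℕ) : MvPolynomial (Fin 2) ℂ) * g := by
      have e : ((ν' + 1 : ℕ) : MvPolynomial (Fin 2) ℂ) * g
          = h2 - MvPolynomial.X 1 * MvPolynomial.pderiv 1 g := by rw [hh2]; ring
      rw [e]
      exact dvd_sub hdvd (Dvd.intro _ rfl)
    rcases (prime_X_fin2 1).2.2 _ _ hdvd' with h | h
    · have hu : IsUnit (((ν' + 1 : ℕ) : MvPolynomial (Fin 2) ℂ)) := by
        rw [← MvPolynomial.C_eq_coe_nat]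
        exact isUnit_C_of_ne (by exact_mod_cast Nat.succ_ne_zero ν')
      exact (prime_X_fin2 1).not_unit (isUnit_of_dvd_unit h hu)
    · exact hgy h
  have hα0 : α = 0 := by
    by_contra hne
    have hdvd : MvPolynomial.X 0 ∣ MvPolynomial.C α * (MvPolynomial.X 1 * h1) := by
      refine ⟨-(MvPolynomial.C β * h2), ?_⟩
      linear_combination key
    rcases (prime_X_fin2 0).2.2 _ _ hdvd with h | h
    · have hu : IsUnit (MvPolynomial.C α : MvPolynomial (Fin 2) ℂ) :=
        isUnit_C_of_ne hne
      exact (prime_X_fin2 0).not_unit (isUnit_of_dvd_unit h hu)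
    · rcases (prime_X_fin2 0).2.2 _ _ h with h' | h'
      · exact X_not_dvd_X (by decide) h'
      · exact hnd1 h'
  have hβ0 : β = 0 := by
    have h2ne : h2 ≠ 0 := fun hz => hnd2 (hz ▸ dvd_zero _)
    have hz : MvPolynomial.C β * (MvPolynomial.X 0 * h2) = 0 := by
      rw [hα0] at key
      simpa [mul_assoc] using key
    rcases mul_eq_zero.mp hz with h | h
    · exact_mod_cast (MvPolynomial.C_eq_zero (σ := Fin 2)).mp h
    · rcases mul_eq_zero.mp h with h' | h'
      · exact absurd h' (MvPolynomial.X_ne_zero 0)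
      · exact absurd h' h2ne
  exact ⟨hα0, hβ0⟩

end
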